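/- For an even number n = 2k of teams with n ≥ 4, any schedule (i.e., any linear ordering of all n(n-1)/2 games) of a single round-robin tournament has guaranteed rest time at most k - 2. -/

import Mathlib

/-- `f` lists the games of a single round-robin tournament on `n` teams:
positions `0, ..., N-1` are in bijection with the unordered pairs of distinct teams. -/
def isSchedule (n N : ℕ) (f : ℕ → Sym2 (Fin n)) : Prop :=
  (∀ i, i < N → ¬ (f i).IsDiag) ∧
  ∀ p : Sym2 (Fin n), ¬ p.IsDiag → ∃! i, i < N ∧ f i = p

/-- The schedule has guaranteed rest time at least `b`: any two games involving a
common team `t` are separated by at least `b` games not involving `t`. -/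
def hasRest (n N : ℕ) (f : ℕ → Sym2 (Fin n)) (b : ℕ) : Prop :=
  ∀ t : Fin n, ∀ i j, i < j → j < N → t ∈ f i → t ∈ f j →
    b ≤ ((Finset.Ioo i j).filter (fun l => t ∉ f l)).card

/-- Number of games played by team `t` in the first `m` games. -/
def played (n : ℕ) (f : ℕ → Sym2 (Fin n)) (t : Fin n) (m : ℕ) : ℕ :=
  ((Finset.range m).filter (fun i => t ∈ f i)).card

/-- The games-played difference index is at most `p`. -/
def gpLe (n N : ℕ) (f : ℕ → Sym2 (Fin n)) (p : ℕ) : Prop :=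
  ∀ m, m ≤ N → ∀ t1 t2 : Fin n, played n f t1 m ≤ played n f t2 m + p

/-- The rest of team `t` going into the game at position `i`: the number of games since
`t`'s previous game, where all teams play an imaginary game one slot before game `0`. -/
def rest (n : ℕ) (f : ℕ → Sym2 (Fin n)) (t : Fin n) (i : ℕ) : ℕ :=
  ((Finset.range i).filter (fun j => ∀ l, j ≤ l → l < i → t ∉ f l)).card

/-- The rest difference index is at most `d`. -/
def rdLe (n N : ℕ) (f : ℕ → Sym2 (Fin n)) (d : ℕ) : Prop :=
  ∀ i, i < N → ∀ t1 t2 : Fin n, t1 ∈ f i → t2 ∈ f i →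
    rest n f t1 i ≤ rest n f t2 i + d

/-- Any schedule for a tournament with an even number `n = 2k ≥ 4` of teams has
guaranteed rest time at most `k - 2`, i.e., it does not have guaranteed rest time
`k - 1`. -/
lemma aux_card2 {m : ℕ} (e : Sym2 (Fin m)) (hd : ¬ e.IsDiag) :
    (Finset.univ.filter (fun t => t ∈ e)).card = 2 := by
  induction e using Sym2.ind with
  | _ x y =>
    have hxy : x ≠ y := by simpa [Sym2.mk_isDiag_iff] using hd
    rw [show Finset.univ.filter (fun t => t ∈ s(x, y)) = {x, y} by
      ext t; simp [Sym2.mem_iff]]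
    exact Finset.card_pair hxy

lemma aux_rep {m : ℕ} (e : Sym2 (Fin m)) (hd : ¬ e.IsDiag) :
    ∃ x y : Fin m, x ≠ y ∧ e = s(x, y) := by
  induction e using Sym2.ind with
  | _ x y => exact ⟨x, y, by simpa [Sym2.mk_isDiag_iff] using hd, rfl⟩

theorem stmt0 (k : ℕ) (hk : 2 ≤ k) (f : ℕ → Sym2 (Fin (2*k)))
    (hf : isSchedule (2*k) (2*k*(2*k-1)/2) f) :
    ¬ hasRest (2*k) (2*k*(2*k-1)/2) f (k-1) := by
  intro hrest
  obtain ⟨hdiag, huniq⟩ := hf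
  set N := 2*k*(2*k-1)/2 with hN
  have hNval : N = k * (2*k-1) := by
    rw [hN, show 2*k*(2*k-1) = 2*(k*(2*k-1)) by ring,
      Nat.mul_div_cancel_left _ (by norm_num)]
  have hkN : k < N := by
    rw [hNval]
    have h3 : 3 ≤ 2*k-1 := by omega
    calc k < k*3 := by omega
      _ ≤ k*(2*k-1) := Nat.mul_le_mul_left k h3
  -- gap lemma: two games of the same team are at least k positions apart
  have gap : ∀ (t : Fin (2*k)) (i j : ℕ), i < j → j < N → t ∈ f i → t ∈ f j →
      i + k ≤ j := by
    intro t i j hij hjN hti htj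
    have h := hrest t i j hij hjN hti htj
    have h2 : ((Finset.Ioo i j).filter (fun l => t ∉ f l)).card ≤ (Finset.Ioo i j).card :=
      Finset.card_filter_le _ _
    rw [Nat.card_Ioo] at h2
    omega
  -- every team plays in the window 1..k
  have window : ∀ a : Fin (2*k), ∃ p, 1 ≤ p ∧ p ≤ k ∧ a ∈ f p := by
    intro a
    have hdisj : ∀ i ∈ Finset.Icc 1 k, ∀ j ∈ Finset.Icc 1 k, i ≠ j →
        Disjoint (Finset.univ.filter (fun t : Fin (2*k) => t ∈ f i))
          (Finset.univ.filter (fun t : Fin (2*k) => t ∈ f j)) := by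
      intro i hi j hj hne
      rw [Finset.mem_Icc] at hi hj
      rw [Finset.disjoint_left]
      intro t ht1 ht2
      rw [Finset.mem_filter] at ht1 ht2
      rcases lt_or_gt_of_ne hne with h | h
      · have := gap t i j h (lt_of_le_of_lt hj.2 hkN) ht1.2 ht2.2; omega
      · have := gap t j i h (lt_of_le_of_lt hi.2 hkN) ht2.2 ht1.2; omega
    have hcard : ((Finset.Icc 1 k).biUnion
        (fun i => Finset.univ.filter (fun t : Fin (2*k) => t ∈ f i))).card = 2*k := by
      rw [Finset.card_biUnion hdisj]
      rw [Finset.sum_congr rfl (fun i hi =>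
        aux_card2 (f i) (hdiag i (lt_of_le_of_lt (Finset.mem_Icc.mp hi).2 hkN)))]
      rw [Finset.sum_const, Nat.card_Icc, smul_eq_mul]
      omega
    have huniv : ((Finset.Icc 1 k).biUnion
        (fun i => Finset.univ.filter (fun t : Fin (2*k) => t ∈ f i))) = Finset.univ :=
      Finset.eq_univ_of_card _ (by rw [hcard]; simp)
    have ha : a ∈ ((Finset.Icc 1 k).biUnion
        (fun i => Finset.univ.filter (fun t : Fin (2*k) => t ∈ f i))) := by
      rw [huniv]; exact Finset.mem_univ a
    rw [Finset.mem_biUnion] at ha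
    obtain ⟨p, hp, hap⟩ := ha
    rw [Finset.mem_Icc] at hp
    rw [Finset.mem_filter] at hap
    exact ⟨p, hp.1, hp.2, hap.2⟩
  -- goal: game k equals game 0
  have h0N : 0 < N := by omega
  have hd0 := hdiag 0 h0N
  obtain ⟨x, y, hxy, h0⟩ := aux_rep (f 0) hd0
  have hx0 : x ∈ f 0 := by rw [h0]; simp
  have hy0 : y ∈ f 0 := by rw [h0]; simp
  obtain ⟨p, hp1, hpk, hxp⟩ := window x
  obtain ⟨q, hq1, hqk, hyq⟩ := window y
  have hp : p = k := by
    have := gap x 0 p (by omega) (lt_of_le_of_lt hpk hkN) hx0 hxp; omega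
  have hq : q = k := by
    have := gap y 0 q (by omega) (lt_of_le_of_lt hqk hkN) hy0 hyq; omega
  rw [hp] at hxp; rw [hq] at hyq
  have hfk : f k = s(x, y) := (Sym2.mem_and_mem_iff hxy).mp ⟨hxp, hyq⟩
  obtain ⟨i0, _, huni⟩ := huniq (f 0) hd0
  have e1 := huni 0 ⟨h0N, rfl⟩
  have e2 := huni k ⟨hkN, by rw [hfk, ← h0]⟩
  omega
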